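/- Let G be a centerless group and A ⊆ G, and suppose that for every ordinal α the centralizer of A in the α-th stage of the automorphism tower is trivial: C_{G^α}(A) = {e}. Then the automorphism tower of G stabilizes and τ_G < (|G|^{|A|} + ℵ₀)⁺, the successor cardinal of |G|^{|A|} + ℵ₀. -/

import Mathlib

universe u

/-- The automorphism tower of a centerless group `G`: an ordinal-indexed increasing
continuous chain of groups, starting at `G`, where each successor stage is (identified
with) the automorphism group of the previous stage via the conjugation embedding. -/
structure AutTower (G : Type u) [Group G] where
  /-- the `o`-th stage `G^o` of the tower -/
  Stage : Ordinal.{u} → GrpCat.{u}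
  /-- the inclusion maps of the tower -/
  map : ∀ ⦃o₁ o₂ : Ordinal.{u}⦄, o₁ ≤ o₂ → (↥(Stage o₁) →* ↥(Stage o₂))
  map_id : ∀ (o : Ordinal.{u}) (x : ↥(Stage o)), map le_rfl x = x
  map_comp : ∀ ⦃o₁ o₂ o₃ : Ordinal.{u}⦄ (h₁ : o₁ ≤ o₂) (h₂ : o₂ ≤ o₃) (x : ↥(Stage o₁)),
      map h₂ (map h₁ x) = map (h₁.trans h₂) x
  map_injective : ∀ ⦃o₁ o₂ : Ordinal.{u}⦄ (h : o₁ ≤ o₂), Function.Injective (map h)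
  /-- the identification of `G` with the `0`-th stage -/
  emb0 : G ≃* ↥(Stage 0)
  /-- the identification of the `(o+1)`-st stage with `Aut(G^o)` -/
  succIso : ∀ o : Ordinal.{u}, ↥(Stage (o + 1)) ≃* MulAut ↥(Stage o)
  /-- under the above identification, the inclusion `G^o ≤ G^{o+1}` is `g ↦` conjugation by `g` -/
  succIso_map : ∀ (o : Ordinal.{u}) (x : ↥(Stage o)),
      succIso o (map (show o ≤ o + 1 from le_self_add) x) = MulAut.conj x
  /-- at limit stages the tower is continuous: `G^δ = ⋃_{α<δ} G^α` -/
  limit_covers : ∀ (o : Ordinal.{u}), Order.IsSuccLimit o → ∀ x : ↥(Stage o),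
      ∃ (o' : Ordinal.{u}) (h : o' < o), x ∈ Set.range (map h.le)

namespace AutTower

variable {G : Type u} [Group G]

/-- the embedding of `G` into the `o`-th stage of its automorphism tower -/
def embed (T : AutTower G) (o : Ordinal.{u}) : G →* ↥(T.Stage o) :=
  (T.map (show (0 : Ordinal.{u}) ≤ o from zero_le)).comp T.emb0.toMonoidHom

/-- `G^{o+1} = G^o`, i.e. the inclusion of stage `o` into stage `o+1` is onto -/
def StabilizesAt (T : AutTower G) (o : Ordinal.{u}) : Prop :=
  Function.Surjective (T.map (show o ≤ o + 1 from le_self_add))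

end AutTower

namespace AutTower

variable {G : Type u} [Group G]

variable (T : AutTower G) {A : Set G}

theorem map_embed {o₁ o₂ : Ordinal.{u}} (h : o₁ ≤ o₂) (g : G) :
    T.map h (T.embed o₁ g) = T.embed o₂ g := by
  simpa [AutTower.embed] using T.map_comp (show (0 : Ordinal.{u}) ≤ o₁ from zero_le) h (T.emb0 g)

theorem conj_map (o : Ordinal.{u}) (σ : ↥(T.Stage (o + 1))) (y : ↥(T.Stage o)) :
    σ * T.map (show o ≤ o + 1 from le_self_add) y * σ⁻¹
      = T.map (show o ≤ o + 1 from le_self_add) ((T.succIso o σ) y) := by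
  apply (T.succIso o).injective
  rw [map_mul, map_mul, map_inv, T.succIso_map, T.succIso_map]
  ext z
  simp [MulAut.mul_apply, MulAut.inv_def, MulAut.conj_apply, mul_assoc]

theorem eq_one_of_cent
    (hcent : ∀ α : Ordinal.{u}, Subgroup.centralizer (⇑(T.embed α) '' A) = ⊥)
    (γ : Ordinal.{u}) {x : ↥(T.Stage γ)}
    (hx : ∀ a ∈ A, T.embed γ a * x = x * T.embed γ a) : x = 1 := by
  have hm : x ∈ Subgroup.centralizer (⇑(T.embed γ) '' A) := by
    rw [Subgroup.mem_centralizer_iff]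
    rintro g ⟨a, ha, rfl⟩
    exact hx a ha
  rw [hcent γ] at hm
  exact Subgroup.mem_bot.mp hm

theorem succ_conj_inj
    (hcent : ∀ α : Ordinal.{u}, Subgroup.centralizer (⇑(T.embed α) '' A) = ⊥)
    (α : Ordinal.{u}) {σ τ : ↥(T.Stage (α + 1))}
    (h : ∀ a ∈ A, (T.succIso α σ) (T.embed α a) = (T.succIso α τ) (T.embed α a)) : σ = τ := by
  have key : ∀ a ∈ A, T.embed (α + 1) a * (τ⁻¹ * σ) = (τ⁻¹ * σ) * T.embed (α + 1) a := by
    intro a ha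
    have h1 : (T.succIso α (τ⁻¹ * σ)) (T.embed α a) = T.embed α a := by
      rw [map_mul, MulAut.mul_apply, h a ha, map_inv, MulAut.inv_def, MulEquiv.symm_apply_apply]
    have h2 := T.conj_map α (τ⁻¹ * σ) (T.embed α a)
    rw [h1, T.map_embed] at h2
    calc T.embed (α + 1) a * (τ⁻¹ * σ)
        = (τ⁻¹ * σ) * T.embed (α + 1) a * (τ⁻¹ * σ)⁻¹ * (τ⁻¹ * σ) := by rw [h2]
      _ = (τ⁻¹ * σ) * T.embed (α + 1) a := by group
  have hone : τ⁻¹ * σ = 1 := T.eq_one_of_cent hcent (α + 1) key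
  rw [inv_mul_eq_one] at hone
  exact hone.symm


end AutTower


open Cardinal Ordinal

theorem kappa_aleph0 {g a : Cardinal.{u}} : ℵ₀ ≤ g ^ a + ℵ₀ := le_add_self

theorem kappa_pow {g a : Cardinal.{u}} (hg : 2 ≤ g) (_ha : a ≠ 0) :
    (g ^ a + ℵ₀) ^ a ≤ g ^ a + ℵ₀ := by
  by_cases hfin : a < ℵ₀
  · exact Cardinal.pow_le kappa_aleph0 hfin
  · have ha0 : ℵ₀ ≤ a := le_of_not_gt hfin
    have h2a : ℵ₀ ≤ g ^ a :=
      ha0.trans ((Cardinal.cantor a).le.trans (Cardinal.power_le_power_right hg))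
    rw [Cardinal.add_eq_left h2a h2a, ← Cardinal.power_mul, Cardinal.mul_eq_self ha0]

theorem kappa_G {g a : Cardinal.{u}} (hg : 2 ≤ g) (ha : a ≠ 0) : g ≤ g ^ a + ℵ₀ := by
  calc g = g ^ (1 : Cardinal) := (Cardinal.power_one g).symm
    _ ≤ g ^ a := Cardinal.power_le_power_left (by positivity) (Cardinal.one_le_iff_ne_zero.mpr ha)
    _ ≤ g ^ a + ℵ₀ := self_le_add_right _ _

noncomputable def ordSeq (F : Ordinal.{u} → Ordinal.{u}) : Ordinal.{u} → Ordinal.{u}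
  | i => Ordinal.bsup.{u, u} i fun j (_ : j < i) => F (ordSeq F j)
termination_by i => i

theorem ordSeq_def (F : Ordinal.{u} → Ordinal.{u}) (i : Ordinal.{u}) :
    ordSeq F i = Ordinal.bsup.{u, u} i fun j (_ : j < i) => F (ordSeq F j) := by
  rw [ordSeq]

theorem ordSeq_mono (F : Ordinal.{u} → Ordinal.{u}) {i i' : Ordinal.{u}} (h : i ≤ i') :
    ordSeq F i ≤ ordSeq F i' := by
  rw [ordSeq_def, ordSeq_def]
  exact Ordinal.bsup_le fun j hj => Ordinal.le_bsup _ j (hj.trans_le h)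

theorem ordSeq_step (F : Ordinal.{u} → Ordinal.{u}) {j i : Ordinal.{u}} (h : j < i) :
    F (ordSeq F j) ≤ ordSeq F i := by
  rw [ordSeq_def F i]
  exact Ordinal.le_bsup _ j h

theorem ordSeq_lt (F : Ordinal.{u} → Ordinal.{u}) {c : Ordinal.{u}}
    (hF : ∀ x, x < c → F x < c) :
    ∀ i : Ordinal.{u}, i.card < c.cof → ordSeq F i < c := by
  intro i
  induction i using Ordinal.induction with
  | h i IH =>
    intro hi
    rw [ordSeq_def]
    exact Ordinal.bsup_lt_ord hi fun j hj =>
      hF _ (IH j hj ((Ordinal.card_le_card hj.le).trans_lt hi))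

theorem limit_card {κ : Cardinal.{u}} (hκ : ℵ₀ ≤ κ) {α : Ordinal.{u}}
    (S : Ordinal.{u} → Type u) (hα : α.card ≤ κ)
    (m : ∀ p : Set.Iio α, S p.1 → S α)
    (cov : ∀ x : S α, ∃ (p : Set.Iio α) (z : S p.1), m p z = x)
    (IH : ∀ p : Set.Iio α, #(S p.1) ≤ κ) : #(S α) ≤ κ := by
  choose p z hz using cov
  have hsurj : Function.Surjective
      (fun q : Σ p : Set.Iio α, ULift.{u+1} (S p.1) => ULift.up.{u+1} (m q.1 q.2.down)) := by
    intro x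
    exact ⟨⟨p x.down, ULift.up (z x.down)⟩, by simp [hz]⟩
  have h1 := Cardinal.mk_le_of_surjective hsurj
  rw [Cardinal.mk_uLift, Cardinal.mk_sigma] at h1
  have h2 : (Cardinal.sum fun p : Set.Iio α => #(ULift.{u+1} (S p.1))) ≤
      Cardinal.sum fun _ : Set.Iio α => Cardinal.lift.{u+1} κ := by
    refine Cardinal.sum_le_sum _ _ fun p => ?_
    rw [Cardinal.mk_uLift]
    exact Cardinal.lift_le.mpr (IH p)
  rw [Cardinal.sum_const, Ordinal.mk_Iio_ordinal] at h2
  have h3 : Cardinal.lift.{u+1} α.card * Cardinal.lift.{u+1} κ ≤ Cardinal.lift.{u+1} κ := by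
    rw [← Cardinal.lift_mul, Cardinal.lift_le]
    calc α.card * κ ≤ κ * κ := mul_le_mul' hα le_rfl
      _ = κ := Cardinal.mul_eq_self hκ
  rw [← Cardinal.lift_le.{u+1}]
  refine (h1.trans h2).trans ?_
  simpa using h3

namespace AutTower

variable {G : Type u} [Group G] (T : AutTower G) {A : Set G}

theorem card_stage
    (hcent : ∀ α : Ordinal.{u}, Subgroup.centralizer (⇑(T.embed α) '' A) = ⊥)
    (hG2 : (2 : Cardinal) ≤ #G) (hA : #↥A ≠ 0) :
    ∀ α : Ordinal.{u}, α.card ≤ #G ^ #↥A + ℵ₀ → #↥(T.Stage α) ≤ #G ^ #↥A + ℵ₀ := by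
  intro α
  induction α using Ordinal.induction with
  | h α IH =>
    intro hα
    rcases Ordinal.zero_or_succ_or_isSuccLimit α with rfl | ⟨β, rfl⟩ | hl
    · calc #↥(T.Stage 0) = #G := Cardinal.mk_congr T.emb0.toEquiv.symm
        _ ≤ _ := kappa_G hG2 hA
    · rw [← Ordinal.add_one_eq_succ] at *
      have hβlt : β < β + 1 := by
        rw [Ordinal.add_one_eq_succ]; exact Order.lt_succ β
      have hS : #↥(T.Stage β) ≤ #G ^ #↥A + ℵ₀ :=
        IH β hβlt ((Ordinal.card_le_card hβlt.le).trans hα)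
      have hinj : Function.Injective
          (fun (σ : ↥(T.Stage (β + 1))) => fun (a : ↥A) => (T.succIso β σ) (T.embed β a.1)) := by
        intro σ τ h
        exact T.succ_conj_inj hcent β fun a ha => congrFun h ⟨a, ha⟩
      calc #↥(T.Stage (β + 1)) ≤ #(↥A → ↥(T.Stage β)) := Cardinal.mk_le_of_injective hinj
        _ = #↥(T.Stage β) ^ #↥A := (Cardinal.power_def _ _).symm
        _ ≤ (#G ^ #↥A + ℵ₀) ^ #↥A := Cardinal.power_le_power_right hS
        _ ≤ #G ^ #↥A + ℵ₀ := kappa_pow hG2 hA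
    · refine limit_card kappa_aleph0 (fun o => ↥(T.Stage o)) hα
        (fun p z => T.map p.2.le z) ?_ (fun p => IH p.1 p.2 ((Ordinal.card_le_card p.2.le).trans hα))
      intro x
      obtain ⟨o', h, y, hy⟩ := T.limit_covers α hl x
      exact ⟨⟨o', h⟩, y, hy⟩

end AutTower

/-- If `G` is centerless and for every ordinal `α` the centralizer of `A` in `G^α`
is trivial, `C_{G^α}(A) = {e}` (with `A ⊆ G` regarded as a subset of `G^α` via the
tower embedding), then the automorphism tower of `G` stabilizes and
`τ_G < (|G|^{|A|} + ℵ₀)⁺`. -/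
theorem autTower_stabilizes_of_centralizer_trivial {G : Type u} [Group G]
    (hG : Subgroup.center G = ⊥) (A : Set G) (T : AutTower G)
    (hcent : ∀ α : Ordinal.{u}, Subgroup.centralizer (⇑(T.embed α) '' A) = ⊥) :
    ∃ α : Ordinal.{u},
      α < (Order.succ (Cardinal.mk G ^ Cardinal.mk ↥A + Cardinal.aleph0)).ord ∧
      T.StabilizesAt α := by
  classical
  set κ : Cardinal.{u} := #G ^ #↥A + ℵ₀ with hκdef
  have hκ0 : ℵ₀ ≤ κ := kappa_aleph0
  set lam : Ordinal.{u} := (Order.succ κ).ord with hlamdef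
  have hzero_lt : (0 : Ordinal.{u}) < lam := by
    rw [hlamdef, Cardinal.lt_ord, Ordinal.card_zero]
    exact (zero_le (a := κ)).trans_lt (Order.lt_succ κ)
  by_cases htriv : ∀ a ∈ A, a = (1 : G)
  · refine ⟨0, hzero_lt, fun y => ⟨1, ?_⟩⟩
    rw [map_one]
    refine (T.eq_one_of_cent hcent (0 + 1) fun a ha => ?_).symm
    rw [htriv a ha, map_one, one_mul, mul_one]
  · push_neg at htriv
    obtain ⟨a₀, ha₀A, ha₀⟩ := htriv
    have hG2 : (2 : Cardinal) ≤ #G := Cardinal.two_le_iff.mpr ⟨a₀, 1, ha₀⟩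
    have : Nonempty ↥A := ⟨⟨a₀, ha₀A⟩⟩
    have hAne : #↥A ≠ 0 := Cardinal.mk_ne_zero ↥A
    have hreg : (Order.succ κ).IsRegular := Cardinal.isRegular_succ hκ0
    have hcof : lam.cof = Order.succ κ := hreg.cof_eq
    have hlim : Order.IsSuccLimit lam := Cardinal.isSuccLimit_ord (hκ0.trans (Order.le_succ κ))
    have hstage : ∀ β, β < lam → #↥(T.Stage β) ≤ κ := fun β hβ =>
      T.card_stage hcent hG2 hAne β (Order.lt_succ_iff.mp (Cardinal.lt_ord.mp hβ))
    by_contra hcon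
    push_neg at hcon
    have hsucc_le : ∀ {α : Ordinal.{u}}, α < lam → α + 1 ≤ lam := fun {α} hα => by
      rw [Ordinal.add_one_eq_succ]; exact (hlim.succ_lt hα).le
    have hx : ∀ α, α < lam → ∃ y : ↥(T.Stage (α + 1)),
        y ∉ Set.range (T.map (show α ≤ α + 1 from le_self_add)) := by
      intro α hα
      by_contra h2
      push_neg at h2
      exact hcon α hα fun y => h2 y
    choose xf hxf using hx
    set yf : ∀ α, α < lam → ↥(T.Stage lam) :=
      fun α hα => T.map (hsucc_le hα) (xf α hα) with hyf
    set ff : ∀ α, α < lam → (↥A → ↥(T.Stage lam)) :=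
      fun α hα a => yf α hα * T.embed lam a.1 * (yf α hα)⁻¹ with hff
    -- distinct α give distinct conjugation functions
    have hkey : ∀ α (hα : α < lam) α' (hα' : α' < lam), α' < α → ff α hα ≠ ff α' hα' := by
      intro α hα α' hα' hlt heq
      have hyy : yf α hα = yf α' hα' := by
        have hc : ∀ a ∈ A, T.embed lam a * ((yf α' hα')⁻¹ * yf α hα)
            = ((yf α' hα')⁻¹ * yf α hα) * T.embed lam a := by
          intro a ha
          have h1 := congrFun heq ⟨a, ha⟩
          simp only [hff] at h1
          calc T.embed lam a * ((yf α' hα')⁻¹ * yf α hα)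
              = (yf α' hα')⁻¹ * (yf α' hα' * T.embed lam a * (yf α' hα')⁻¹) * yf α hα := by
                group
            _ = (yf α' hα')⁻¹ * (yf α hα * T.embed lam a * (yf α hα)⁻¹) * yf α hα := by
                rw [← h1]
            _ = ((yf α' hα')⁻¹ * yf α hα) * T.embed lam a := by group
        have h2 := T.eq_one_of_cent hcent lam hc
        rwa [inv_mul_eq_one, eq_comm] at h2
      have hsle : α' + 1 ≤ α := by
        rw [Ordinal.add_one_eq_succ]; exact Order.succ_le_of_lt hlt
      apply hxf α hα
      refine ⟨T.map hsle (xf α' hα'), ?_⟩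
      apply T.map_injective (hsucc_le hα)
      rw [T.map_comp, T.map_comp]
      exact hyy.symm
    -- boundedness of the set of α whose conjugation function lands in stage β
    have hSbound : ∀ β (hβ : β < lam), ∃ gβ, gβ < lam ∧ ∀ α (hα : α < lam),
        (∀ a : ↥A, ff α hα a ∈ Set.range (T.map hβ.le)) → α < gβ := by
      intro β hβ
      set Gv : (↥A → ↥(T.Stage β)) → Ordinal.{u} := fun v =>
        if h : ∃ α, ∃ hα : α < lam, ∀ a : ↥A, T.map hβ.le (v a) = ff α hα a
        then h.choose + 1 else 0 with hGv
      have hGvlt : ∀ v, Gv v < lam := by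
        intro v
        simp only [hGv]
        split_ifs with h
        · have hα := h.choose_spec.choose
          rw [Ordinal.add_one_eq_succ]
          exact hlim.succ_lt hα
        · exact hzero_lt
      refine ⟨iSup Gv, ?_, ?_⟩
      · refine Ordinal.iSup_lt_ord ?_ hGvlt
        rw [hcof]
        calc #(↥A → ↥(T.Stage β)) = #↥(T.Stage β) ^ #↥A := (Cardinal.power_def _ _).symm
          _ ≤ κ ^ #↥A := Cardinal.power_le_power_right (hstage β hβ)
          _ ≤ κ := kappa_pow hG2 hAne
          _ < Order.succ κ := Order.lt_succ κ
      · intro α hα hmem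
        have hmem' : ∀ a : ↥A, ∃ w : ↥(T.Stage β), T.map hβ.le w = ff α hα a := fun a => hmem a
        choose v hv using hmem'
        have hex : ∃ α', ∃ hα' : α' < lam, ∀ a : ↥A, T.map hβ.le (v a) = ff α' hα' a :=
          ⟨α, hα, hv⟩
        have heqα : hex.choose = α := by
          by_contra hne
          obtain ⟨hα', hv'⟩ := hex.choose_spec
          have heqf : ff hex.choose hα' = ff α hα := by
            funext a
            rw [← hv' a, hv a]
          rcases lt_or_gt_of_ne hne with h | h
          · exact hkey α hα hex.choose hα' h heqf.symm
          · exact hkey hex.choose hα' α hα h heqf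
        have hlt2 : α < Gv v := by
          simp only [hGv]
          rw [dif_pos hex, heqα]
          rw [Ordinal.add_one_eq_succ]
          exact Order.lt_succ α
        exact hlt2.trans_le (Ordinal.le_iSup Gv v)
    choose gf hglt hgspec using hSbound
    set g' : Ordinal.{u} → Ordinal.{u} := fun β => if hβ : β < lam then gf β hβ else 0 with hg'
    set F : Ordinal.{u} → Ordinal.{u} := fun x =>
      max (x + 1) (Ordinal.bsup.{u, u} (x + 1) fun β _ => g' β) with hFdef
    have hFlt : ∀ x, x < lam → F x < lam := by
      intro x hx
      have hx1 : x + 1 < lam := by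
        rw [Ordinal.add_one_eq_succ]; exact hlim.succ_lt hx
      simp only [hFdef]
      apply max_lt hx1
      refine Ordinal.bsup_lt_ord ?_ fun β hβ => ?_
      · rw [hcof]
        exact Cardinal.lt_ord.mp hx1
      · have hβlam : β < lam := hβ.trans hx1
        simp only [hg']
        rw [dif_pos hβlam]
        exact hglt β hβlam
    have hself : ∀ x, x < F x := fun x =>
      lt_of_lt_of_le (by rw [Ordinal.add_one_eq_succ]; exact Order.lt_succ x) (le_max_left _ _)
    have hFg : ∀ β x, β ≤ x → g' β ≤ F x := by
      intro β x hβx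
      refine le_trans ?_ (le_max_right _ _)
      refine le_trans ?_ (Ordinal.le_bsup (fun β (_ : β < x + 1) => g' β) β
        (by rw [Ordinal.add_one_eq_succ]; exact Order.lt_succ_iff.mpr hβx))
      exact le_rfl
    obtain ⟨μ, hμreg, hμA, hμκ⟩ : ∃ μ : Cardinal.{u}, μ.IsRegular ∧ #↥A < μ ∧ μ ≤ κ := by
      by_cases hfin : #↥A < ℵ₀
      · exact ⟨ℵ₀, Cardinal.isRegular_aleph0, hfin, hκ0⟩
      · have ha0 : ℵ₀ ≤ #↥A := le_of_not_gt hfin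
        refine ⟨Order.succ (#↥A), Cardinal.isRegular_succ ha0, Order.lt_succ _, ?_⟩
        calc Order.succ (#↥A) ≤ 2 ^ #↥A := Order.succ_le_of_lt (Cardinal.cantor _)
          _ ≤ #G ^ #↥A := Cardinal.power_le_power_right hG2
          _ ≤ κ := self_le_add_right _ _
    set d : Ordinal.{u} → Ordinal.{u} := ordSeq F with hd
    have hdlt : ∀ i, i.card ≤ κ → d i < lam := fun i hi =>
      ordSeq_lt F hFlt i (by rw [hcof]; exact Order.lt_succ_iff.mpr hi)
    have hμord : Order.IsSuccLimit μ.ord := Cardinal.isSuccLimit_ord hμreg.aleph0_le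
    have hdlam : ∀ i, i ≤ μ.ord → d i < lam := fun i hi =>
      hdlt i ((Ordinal.card_le_card hi).trans (by rw [Cardinal.card_ord]; exact hμκ))
    set δ : Ordinal.{u} := d μ.ord with hδ
    have hδlam : δ < lam := hdlam μ.ord le_rfl
    have hdmono : ∀ {i i' : Ordinal.{u}}, i ≤ i' → d i ≤ d i' := fun h => ordSeq_mono F h
    have hdstep : ∀ {j i : Ordinal.{u}}, j < i → F (d j) ≤ d i := fun h => ordSeq_step F h
    have hdlt' : ∀ {j i : Ordinal.{u}}, j < i → d j < d i :=
      fun {j i} h => (hself (d j)).trans_le (hdstep h)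
    have hδlim : Order.IsSuccLimit δ := by
      rw [Ordinal.isSuccLimit_iff]
      constructor
      · have hlt0 : d 0 < δ := hdlt' hμord.pos
        intro h0
        rw [h0] at hlt0
        exact not_lt_zero hlt0
      · rw [Order.isSuccPrelimit_iff_succ_lt]
        intro γ hγ
        rw [hδ, hd, ordSeq_def] at hγ
        obtain ⟨j, hj, hγj⟩ := (Ordinal.lt_bsup _).mp hγ
        have h1 : Order.succ γ ≤ F (ordSeq F j) := Order.succ_le_of_lt hγj
        have hj1 : j + 1 < μ.ord := by
          rw [Ordinal.add_one_eq_succ]; exact hμord.succ_lt hj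
        have h2 : F (ordSeq F j) ≤ d (j + 1) := hdstep (by
          rw [Ordinal.add_one_eq_succ]; exact Order.lt_succ j)
        have h3 : d (j + 1) < δ := hdlt' hj1
        exact lt_of_le_of_lt (h1.trans h2) h3
    -- the conjugates of x_δ land in a bounded stage
    have hmemδ : ∀ a : ↥A,
        ff δ hδlam a ∈ Set.range (T.map ((show δ ≤ δ + 1 from le_self_add).trans (hsucc_le hδlam))) := by
      intro a
      refine ⟨(T.succIso δ (xf δ hδlam)) (T.embed δ a.1), ?_⟩
      rw [← T.map_comp (show δ ≤ δ + 1 from le_self_add) (hsucc_le hδlam)]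
      rw [← T.conj_map δ (xf δ hδlam) (T.embed δ a.1)]
      simp only [hff]
      rw [map_mul, map_mul, map_inv, T.map_comp, T.map_embed]
    have hstepmem : ∀ a : ↥A, ∃ j, ∃ hj : j < μ.ord,
        ∃ w : ↥(T.Stage (d (j + 1))),
          T.map (hdlam (j + 1) (by rw [Ordinal.add_one_eq_succ]; exact (hμord.succ_lt hj).le)).le w
            = ff δ hδlam a := by
      intro a
      obtain ⟨w0, hw0⟩ := hmemδ a
      obtain ⟨β, hβδ, w1, hw1⟩ := T.limit_covers δ hδlim w0
      have hβδ' := hβδ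
      rw [hδ, hd, ordSeq_def] at hβδ'
      obtain ⟨j, hj, hβF⟩ := (Ordinal.lt_bsup _).mp hβδ'
      have hβd : β ≤ d (j + 1) := (hβF.trans_le (hdstep (by
        rw [Ordinal.add_one_eq_succ]; exact Order.lt_succ j))).le
      refine ⟨j, hj, T.map hβd w1, ?_⟩
      rw [T.map_comp]
      rw [← hw0, ← hw1, T.map_comp]
    choose jf hjf wf hwf using hstepmem
    set i₀ : Ordinal.{u} := iSup (fun a : ↥A => jf a + 1) with hi₀
    have hi₀lt : i₀ < μ.ord := by
      refine Ordinal.iSup_lt_ord ?_ fun a => ?_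
      · rw [hμreg.cof_eq]; exact hμA
      · rw [Ordinal.add_one_eq_succ]; exact hμord.succ_lt (hjf a)
    have hβσ : d i₀ < lam := hdlam i₀ hi₀lt.le
    have hall : ∀ a : ↥A, ff δ hδlam a ∈ Set.range (T.map hβσ.le) := by
      intro a
      have hle : d (jf a + 1) ≤ d i₀ := hdmono (Ordinal.le_iSup (fun a : ↥A => jf a + 1) a)
      refine ⟨T.map hle (wf a), ?_⟩
      rw [T.map_comp]
      exact hwf a
    have hfinal := hgspec (d i₀) hβσ δ hδlam hall
    have h1 : gf (d i₀) hβσ ≤ g' (d i₀) := by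
      simp only [hg']
      rw [dif_pos hβσ]
    have h2 : g' (d i₀) ≤ F (d i₀) := hFg _ _ le_rfl
    have h3 : F (d i₀) ≤ d (i₀ + 1) := hdstep (by
      rw [Ordinal.add_one_eq_succ]; exact Order.lt_succ i₀)
    have h4 : d (i₀ + 1) ≤ δ := hdmono (by
      rw [Ordinal.add_one_eq_succ]; exact (hμord.succ_lt hi₀lt).le)
    exact absurd (hfinal.trans_le (((h1.trans h2).trans h3).trans h4)) (lt_irrefl δ)
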